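/- (Andreief's identity) Let $(X,\mu)$ be a measure space, let $n$ be a positive integer, and let $f_1,\dots,f_n$ and $g_1,\dots,g_n$ be integrable functions on $X$ such that all products $f_j g_k$ are integrable. Then $\int_{X^n} \det(f_j(x_k))_{1\le j,k\le n} \cdot \det(g_j(x_k))_{1\le j,k\le n} \, d\mu(x_1)\cdots d\mu(x_n) = n! \cdot \det\left(\int_X f_j(x) g_k(x)\, d\mu(x)\right)_{1\le j,k\le n}$. -/

import Mathlib

open MeasureTheory Set Equiv Finset

section andreief_aux

lemma andreief_alg {n : ℕ} (a : Matrix (Fin n) (Fin n) ℝ) :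
    ∑ σ : Perm (Fin n), ∑ τ : Perm (Fin n),
      (((Equiv.Perm.sign σ : ℤ) : ℝ) * ((Equiv.Perm.sign τ : ℤ) : ℝ)) * ∏ k, a (σ k) (τ k)
      = (Nat.factorial n : ℝ) * a.det := by
  have hinner : ∀ σ : Perm (Fin n),
      ∑ τ : Perm (Fin n),
        (((Equiv.Perm.sign σ : ℤ) : ℝ) * ((Equiv.Perm.sign τ : ℤ) : ℝ)) * ∏ k, a (σ k) (τ k)
        = a.det := by
    intro σ
    rw [show a.det = a.transpose.det from (Matrix.det_transpose a).symm, Matrix.det_apply']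
    refine Fintype.sum_equiv (Equiv.mulRight σ⁻¹) _ _ ?_
    intro τ
    have h1 : ∏ x, a.transpose ((τ * σ⁻¹) x) x = ∏ k, a (σ k) (τ k) := by
      rw [← Equiv.prod_comp σ (fun x => a.transpose ((τ * σ⁻¹) x) x)]
      simp [Matrix.transpose_apply, Equiv.Perm.mul_apply]
    simp only [Equiv.coe_mulRight, h1]
    have h2 : ((((Equiv.Perm.sign (τ * σ⁻¹)) : ℤ)) : ℝ)
        = ((Equiv.Perm.sign σ : ℤ) : ℝ) * ((Equiv.Perm.sign τ : ℤ) : ℝ) := by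
      rcases Int.units_eq_one_or (Equiv.Perm.sign σ) with h | h <;>
        rcases Int.units_eq_one_or (Equiv.Perm.sign τ) with h' | h' <;>
          simp [Equiv.Perm.sign_mul, Equiv.Perm.sign_inv, h, h']
    rw [h2]
  rw [Finset.sum_congr rfl (fun σ _ => hinner σ), Finset.sum_const, Finset.card_univ,
    Fintype.card_perm, Fintype.card_fin, nsmul_eq_mul]

lemma andreief_key {X : Type*} [MeasureSpace X] [SigmaFinite (volume : Measure X)]
    (n : ℕ) (f g : Fin n → X → ℝ)
    (hfg : ∀ j k, Integrable (fun x => f j x * g k x)) :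
    ∫ x : Fin n → X,
        (Matrix.det (Matrix.of fun j k => f j (x k))) *
        (Matrix.det (Matrix.of fun j k => g j (x k)))
    = (Nat.factorial n : ℝ) *
        Matrix.det (Matrix.of fun j k => ∫ x, f j x * g k x) := by
  have hint : ∀ σ τ : Perm (Fin n),
      Integrable (fun x : Fin n → X => ∏ k, (f (σ k) (x k) * g (τ k) (x k))) :=
    fun σ τ => Integrable.fintype_prod (f := fun k y => f (σ k) y * g (τ k) y)
      (fun k => hfg (σ k) (τ k))
  have expand : (fun x : Fin n → X =>
      (Matrix.det (Matrix.of fun j k => f j (x k))) *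
      (Matrix.det (Matrix.of fun j k => g j (x k))))
      = fun x => ∑ σ : Perm (Fin n), ∑ τ : Perm (Fin n),
          (((Equiv.Perm.sign σ : ℤ) : ℝ) * ((Equiv.Perm.sign τ : ℤ) : ℝ)) *
            ∏ k, (f (σ k) (x k) * g (τ k) (x k)) := by
    funext x
    rw [Matrix.det_apply', Matrix.det_apply', Finset.sum_mul_sum]
    refine Finset.sum_congr rfl fun σ _ => Finset.sum_congr rfl fun τ _ => ?_
    simp only [Matrix.of_apply, Finset.prod_mul_distrib]
    ring
  rw [expand]
  rw [integral_finset_sum _ (fun σ _ => integrable_finset_sum _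
        (fun τ _ => (hint σ τ).const_mul _))]
  have step : ∀ σ : Perm (Fin n),
      ∫ x : Fin n → X, ∑ τ : Perm (Fin n),
          (((Equiv.Perm.sign σ : ℤ) : ℝ) * ((Equiv.Perm.sign τ : ℤ) : ℝ)) *
            ∏ k, (f (σ k) (x k) * g (τ k) (x k))
      = ∑ τ : Perm (Fin n),
          (((Equiv.Perm.sign σ : ℤ) : ℝ) * ((Equiv.Perm.sign τ : ℤ) : ℝ)) *
            ∏ k, ∫ y, f (σ k) y * g (τ k) y := by
    intro σ
    rw [integral_finset_sum _ (fun τ _ => (hint σ τ).const_mul _)]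
    refine Finset.sum_congr rfl fun τ _ => ?_
    rw [integral_const_mul]
    congr 1
    exact MeasureTheory.integral_fintype_prod_eq_prod (ι := Fin n)
      (f := fun k y => f (σ k) y * g (τ k) y)
  rw [Finset.sum_congr rfl (fun σ _ => step σ)]
  exact andreief_alg (Matrix.of fun j k => ∫ x, f j x * g k x)

variable {X : Type*} [MeasurableSpace X] {n : ℕ}

lemma pi_cyl_null (μ : Measure X) (k : Fin n) {N : Set X} (hN : μ N = 0) :
    Measure.pi (fun _ : Fin n => μ) (Function.eval k ⁻¹' N) = 0 := by
  rcases exists_measurable_superset_of_null hN with ⟨t, hNt, htm, hμt⟩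
  refine measure_mono_null (Set.preimage_mono hNt) (le_antisymm ?_ zero_le)
  have hmeas : MeasurableSet (Function.eval k ⁻¹' t : Set (Fin n → X)) :=
    (measurable_pi_apply k) htm
  rw [Measure.pi_def, toMeasure_apply _ _ hmeas, ← Set.univ_pi_update_univ]
  refine le_trans (MeasureTheory.OuterMeasure.pi_pi_le _ _) (le_of_eq ?_)
  refine Finset.prod_eq_zero (Finset.mem_univ k) ?_
  simp [hμt]

lemma pi_mono' {μ ν : Measure X} (h : ν ≤ μ) {A : Set (Fin n → X)} (hA : MeasurableSet A) :
    Measure.pi (fun _ : Fin n => ν) A ≤ Measure.pi (fun _ : Fin n => μ) A := by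
  rw [Measure.pi_def, Measure.pi_def, toMeasure_apply _ _ hA, toMeasure_apply _ _ hA]
  have : MeasureTheory.OuterMeasure.pi (fun _ : Fin n => ν.toOuterMeasure)
      ≤ MeasureTheory.OuterMeasure.pi (fun _ : Fin n => μ.toOuterMeasure) := by
    simp only [MeasureTheory.OuterMeasure.pi]
    refine OuterMeasure.le_boundedBy.2 fun s =>
      le_trans (OuterMeasure.boundedBy_le s) ?_
    simp only [piPremeasure]
    exact Finset.prod_le_prod' fun i _ => Measure.le_iff'.1 h _
  exact this A

lemma pi_restrict_eq (μ : Measure X) {S : Set X} (hS : MeasurableSet S)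
    [SigmaFinite (μ.restrict S)] :
    Measure.pi (fun _ : Fin n => μ.restrict S)
      = (Measure.pi fun _ : Fin n => μ).restrict (Set.pi Set.univ fun _ => S) := by
  refine Measure.pi_eq (μ := fun _ : Fin n => μ.restrict S) fun s hs => ?_
  rw [Measure.restrict_apply (MeasurableSet.univ_pi hs), ← Set.pi_inter_distrib]
  have hmeas : ∀ i, MeasurableSet (s i ∩ S) := fun i => (hs i).inter hS
  have hub : Measure.pi (fun _ : Fin n => μ) (Set.pi Set.univ fun i => s i ∩ S)
      ≤ ∏ i, (μ.restrict S) (s i) := by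
    rw [Measure.pi_def, toMeasure_apply _ _ (MeasurableSet.univ_pi hmeas)]
    refine le_trans (MeasureTheory.OuterMeasure.pi_pi_le _ _)
      (le_of_eq (Finset.prod_congr rfl fun i _ => ?_))
    rw [Measure.restrict_apply (hs i)]
    rfl
  have hlb : ∏ i, (μ.restrict S) (s i)
      ≤ Measure.pi (fun _ : Fin n => μ) (Set.pi Set.univ fun i => s i ∩ S) := by
    have h1 : Measure.pi (fun _ : Fin n => μ.restrict S) (Set.pi Set.univ fun i => s i ∩ S)
        = ∏ i, (μ.restrict S) (s i) := by
      rw [Measure.pi_pi]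
      refine Finset.prod_congr rfl fun i _ => ?_
      rw [Measure.restrict_apply (hmeas i), Measure.restrict_apply (hs i),
        Set.inter_assoc, Set.inter_self]
    rw [← h1]
    exact pi_mono' Measure.restrict_le_self (MeasurableSet.univ_pi hmeas)
  exact le_antisymm hub hlb

end andreief_aux

/-- Andreief's identity -/
theorem stmt_1 {X : Type*} [MeasurableSpace X] (μ : Measure X) (n : ℕ) (hn : 0 < n)
    (f g : Fin n → X → ℝ)
    (hf : ∀ j, Integrable (f j) μ) (hg : ∀ j, Integrable (g j) μ)
    (hfg : ∀ j k, Integrable (fun x => f j x * g k x) μ) :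
    ∫ x : Fin n → X,
        (Matrix.det (Matrix.of fun j k => f j (x k))) *
        (Matrix.det (Matrix.of fun j k => g j (x k)))
        ∂(Measure.pi fun _ : Fin n => μ) =
    (Nat.factorial n : ℝ) *
      Matrix.det (Matrix.of fun j k => ∫ x, f j x * g k x ∂μ) := by
  classical
  choose tf htfm htfz htfsf using
    fun j => ((hf j).aefinStronglyMeasurable).exists_set_sigmaFinite
  choose tg htgm htgz htgsf using
    fun j => ((hg j).aefinStronglyMeasurable).exists_set_sigmaFinite
  set S : Set X := (⋃ j, tf j) ∪ ⋃ j, tg j with hS_def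
  have hSm : MeasurableSet S := (MeasurableSet.iUnion htfm).union (MeasurableSet.iUnion htgm)
  haveI htfsf' : ∀ j, SigmaFinite (μ.restrict (tf j)) := htfsf
  haveI htgsf' : ∀ j, SigmaFinite (μ.restrict (tg j)) := htgsf
  haveI h1sf : SigmaFinite (μ.restrict (⋃ j, tf j)) :=
    Measure.sigmaFinite_of_le _ Measure.restrict_iUnion_le
  haveI h2sf : SigmaFinite (μ.restrict (⋃ j, tg j)) :=
    Measure.sigmaFinite_of_le _ Measure.restrict_iUnion_le
  haveI hsf : SigmaFinite (μ.restrict S) := by rw [hS_def]; infer_instance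
  set F : Fin n → X → ℝ := fun j => S.indicator (f j) with hF_def
  set G : Fin n → X → ℝ := fun j => S.indicator (g j) with hG_def
  have hFf : ∀ j, f j =ᵐ[μ] F j := by
    intro j
    have h1 : ∀ᵐ x ∂μ, x ∈ (tf j)ᶜ → f j x = 0 :=
      (ae_restrict_iff' (htfm j).compl).1 (htfz j)
    filter_upwards [h1] with x hx
    by_cases hxS : x ∈ S
    · simp [F, Set.indicator_of_mem hxS]
    · have hxt : x ∈ (tf j)ᶜ := fun h =>
        hxS (Set.mem_union_left _ (Set.mem_iUnion_of_mem j h))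
      simp [F, Set.indicator_of_notMem hxS, hx hxt]
  have hGg : ∀ j, g j =ᵐ[μ] G j := by
    intro j
    have h1 : ∀ᵐ x ∂μ, x ∈ (tg j)ᶜ → g j x = 0 :=
      (ae_restrict_iff' (htgm j).compl).1 (htgz j)
    filter_upwards [h1] with x hx
    by_cases hxS : x ∈ S
    · simp [G, Set.indicator_of_mem hxS]
    · have hxt : x ∈ (tg j)ᶜ := fun h =>
        hxS (Set.mem_union_right _ (Set.mem_iUnion_of_mem j h))
      simp [G, Set.indicator_of_notMem hxS, hx hxt]
  -- replace f,g by F,G in the LHS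
  have hcongf : ∀ j k : Fin n,
      ∀ᵐ x : Fin n → X ∂(Measure.pi fun _ : Fin n => μ), f j (x k) = F j (x k) := by
    intro j k
    have h0 := pi_cyl_null μ k (ae_iff.1 (hFf j))
    rw [ae_iff]
    exact measure_mono_null (fun x hx => hx) h0
  have hcongg : ∀ j k : Fin n,
      ∀ᵐ x : Fin n → X ∂(Measure.pi fun _ : Fin n => μ), g j (x k) = G j (x k) := by
    intro j k
    have h0 := pi_cyl_null μ k (ae_iff.1 (hGg j))
    rw [ae_iff]
    exact measure_mono_null (fun x hx => hx) h0
  have hae : (fun x : Fin n → X =>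
      (Matrix.det (Matrix.of fun j k => f j (x k))) *
      (Matrix.det (Matrix.of fun j k => g j (x k))))
      =ᵐ[Measure.pi fun _ : Fin n => μ]
      (fun x =>
      (Matrix.det (Matrix.of fun j k => F j (x k))) *
      (Matrix.det (Matrix.of fun j k => G j (x k)))) := by
    have h1 : ∀ᵐ x : Fin n → X ∂(Measure.pi fun _ : Fin n => μ),
        ∀ j k, f j (x k) = F j (x k) :=
      ae_all_iff.2 fun j => ae_all_iff.2 fun k => hcongf j k
    have h2 : ∀ᵐ x : Fin n → X ∂(Measure.pi fun _ : Fin n => μ),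
        ∀ j k, g j (x k) = G j (x k) :=
      ae_all_iff.2 fun j => ae_all_iff.2 fun k => hcongg j k
    filter_upwards [h1, h2] with x hx1 hx2
    congr 1
    · congr 1; ext j k; exact hx1 j k
    · congr 1; ext j k; exact hx2 j k
  rw [integral_congr_ae hae]
  -- restrict to Sⁿ
  have hvanish : ∀ x : Fin n → X, x ∉ Set.pi Set.univ (fun _ : Fin n => S) →
      (Matrix.det (Matrix.of fun j k => F j (x k))) *
      (Matrix.det (Matrix.of fun j k => G j (x k))) = 0 := by
    intro x hx
    obtain ⟨k, hk⟩ : ∃ k, x k ∉ S := by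
      by_contra hcon
      push_neg at hcon
      exact hx fun k _ => hcon k
    have hz : Matrix.det (Matrix.of fun j k' => F j (x k')) = 0 :=
      Matrix.det_eq_zero_of_column_eq_zero k
        (fun i => Set.indicator_of_notMem hk _)
    rw [hz, zero_mul]
  rw [← setIntegral_eq_integral_of_forall_compl_eq_zero hvanish,
    ← pi_restrict_eq μ hSm]
  -- entries of the RHS matrix
  have hent : ∀ j k : Fin n,
      ∫ x, f j x * g k x ∂μ = ∫ x, F j x * G k x ∂(μ.restrict S) := by
    intro j k
    rw [setIntegral_eq_integral_of_forall_compl_eq_zero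
      (s := S) (f := fun x => F j x * G k x)
      (fun x hx => by simp [F, G, Set.indicator_of_notMem hx])]
    exact integral_congr_ae ((hFf j).mul (hGg k))
  have hmat : (Matrix.of fun j k => ∫ x, f j x * g k x ∂μ)
      = (Matrix.of fun j k => ∫ x, F j x * G k x ∂(μ.restrict S)) := by
    ext j k; exact hent j k
  rw [hmat]
  -- apply the sigma-finite case
  letI : MeasureSpace X := ⟨μ.restrict S⟩
  haveI : SigmaFinite (volume : Measure X) := hsf
  have hFG : ∀ j k : Fin n, Integrable (fun x => F j x * G k x) (μ.restrict S) :=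
    fun j k => ((hfg j k).restrict).congr
      (((hFf j).mul (hGg k)).filter_mono (ae_mono Measure.restrict_le_self))
  exact andreief_key n F G hFG
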